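/- Let A^{(1)},…,A^{(N)} be invertible 2×2 real matrices with all entries strictly positive and let s ∈ [0,2]. Then there exists a constant c > 0, depending only on the matrices and s, such that for every n ≥ 1, every word (i₁,…,i_n) ∈ {1,…,N}^n with A := A^{(i₁)} ⋯ A^{(i_n)}, and every x ∈ (0,1), c⁻¹ φ^s(A) ≤ ψ_{A,s}(x) ≤ c φ^s(A). -/

import Mathlib

open Set Metric

noncomputable def opNorm (A : Matrix (Fin 2) (Fin 2) ℝ) : ℝ :=
  ‖LinearMap.toContinuousLinearMap (Matrix.toEuclideanLin A)‖

noncomputable def phiSV (s : ℝ) (A : Matrix (Fin 2) (Fin 2) ℝ) : ℝ :=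
  if s ≤ 1 then opNorm A ^ s else opNorm A ^ (2 - s) * |A.det| ^ (s - 1)

/-- For a 2×2 real matrix `A = [[a,b],[c,d]]`, `wReal A x = (a+c−b−d)x + b + d`. -/
noncomputable def wReal (A : Matrix (Fin 2) (Fin 2) ℝ) (x : ℝ) : ℝ :=
  (A 0 0 + A 1 0 - A 0 1 - A 1 1) * x + A 0 1 + A 1 1

/-- `ψ_{A,s}(x) = w_A(x)^s` for `0 ≤ s ≤ 1` and `w_A(x)^{2−s}|det A|^{s−1}` for `1 < s ≤ 2`. -/
noncomputable def psiReal (s : ℝ) (A : Matrix (Fin 2) (Fin 2) ℝ) (x : ℝ) : ℝ :=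
  if s ≤ 1 then wReal A x ^ s else wReal A x ^ (2 - s) * |A.det| ^ (s - 1)


/-- Auxiliary: "good" matrices have positive entries comparable within rows and columns. -/
def GoodMat (K : ℝ) (P : Matrix (Fin 2) (Fin 2) ℝ) : Prop :=
  (∀ i j, 0 < P i j) ∧ (∀ i i' j, P i j ≤ K * P i' j) ∧ (∀ i j j', P i j ≤ K * P i j')

lemma GoodMat.mul {K : ℝ} {P Q : Matrix (Fin 2) (Fin 2) ℝ}
    (hP : GoodMat K P) (hQ : GoodMat K Q) : GoodMat K (P * Q) := by
  obtain ⟨hP0, hPc, hPr⟩ := hP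
  obtain ⟨hQ0, hQc, hQr⟩ := hQ
  have hmul : ∀ i j, (P * Q) i j = P i 0 * Q 0 j + P i 1 * Q 1 j := by
    intro i j; rw [Matrix.mul_apply, Fin.sum_univ_two]
  refine ⟨fun i j => ?_, fun i i' j => ?_, fun i j j' => ?_⟩
  · rw [hmul]
    exact add_pos (mul_pos (hP0 i 0) (hQ0 0 j)) (mul_pos (hP0 i 1) (hQ0 1 j))
  · rw [hmul, hmul]
    have h0 := hPc i i' 0; have h1 := hPc i i' 1
    have := (hQ0 0 j).le; have := (hQ0 1 j).le
    nlinarith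
  · rw [hmul, hmul]
    have h0 := hQr 0 j j'; have h1 := hQr 1 j j'
    have := (hP0 i 0).le; have := (hP0 i 1).le
    nlinarith

lemma GoodMat.list_prod {K : ℝ} {l : List (Matrix (Fin 2) (Fin 2) ℝ)}
    (hne : l ≠ []) (h : ∀ P ∈ l, GoodMat K P) : GoodMat K l.prod := by
  induction l with
  | nil => exact absurd rfl hne
  | cons a t ih =>
    rw [List.prod_cons]
    rcases eq_or_ne t [] with rfl | ht
    · simpa using h a List.mem_cons_self
    · exact (h a List.mem_cons_self).mul
        (ih ht (fun P hP => h P (List.mem_cons_of_mem _ hP)))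

lemma euclidean_abs_le_norm (y : EuclideanSpace ℝ (Fin 2)) (i : Fin 2) : |y i| ≤ ‖y‖ := by
  rw [EuclideanSpace.norm_eq]
  have : |y i| = Real.sqrt (|y i|^2) := by
    rw [Real.sqrt_sq_eq_abs, abs_abs]
  rw [this]
  apply Real.sqrt_le_sqrt
  have := Finset.single_le_sum (f := fun j => ‖y j‖^2) (fun j _ => sq_nonneg _)
    (Finset.mem_univ i)
  simpa [Real.norm_eq_abs] using this

lemma entry_le_opNorm (A : Matrix (Fin 2) (Fin 2) ℝ) (i j : Fin 2) (h : 0 ≤ A i j) :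
    A i j ≤ opNorm A := by
  set f := LinearMap.toContinuousLinearMap (Matrix.toEuclideanLin A)
  have h1 : ‖f (EuclideanSpace.single j 1)‖ ≤ opNorm A := by
    have := f.le_opNorm (EuclideanSpace.single j 1)
    exact (by simpa [EuclideanSpace.norm_single] using this : ‖f (EuclideanSpace.single j 1)‖ ≤ ‖f‖)
  refine le_trans ?_ h1
  have hv : f (EuclideanSpace.single j 1) i = A i j := by
    show (Matrix.mulVec A (Pi.single j 1)) i = A i j
    simp [Matrix.mulVec_single]
  calc A i j = |f (EuclideanSpace.single j 1) i| := by rw [hv, abs_of_nonneg h]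
  _ ≤ _ := euclidean_abs_le_norm _ i

lemma opNorm_le_of_entries (A : Matrix (Fin 2) (Fin 2) ℝ) (M : ℝ)
    (h : ∀ i j, |A i j| ≤ M) : opNorm A ≤ 2 * M := by
  have hM : 0 ≤ M := le_trans (abs_nonneg _) (h 0 0)
  apply ContinuousLinearMap.opNorm_le_bound _ (by linarith)
  intro x
  have hfx : ∀ i, (LinearMap.toContinuousLinearMap (Matrix.toEuclideanLin A)) x i
      = A i 0 * x 0 + A i 1 * x 1 := by
    intro i
    show (Matrix.mulVec A (WithLp.equiv 2 _ x)) i = _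
    simp [Matrix.mulVec, dotProduct, Fin.sum_univ_two]
  have hx2 : ‖x‖^2 = (x 0)^2 + (x 1)^2 := by
    rw [EuclideanSpace.norm_eq, Real.sq_sqrt (by positivity)]
    simp [Fin.sum_univ_two, Real.norm_eq_abs, sq_abs]
  have hb : ∀ i, |(LinearMap.toContinuousLinearMap (Matrix.toEuclideanLin A)) x i|
      ≤ M * (|x 0| + |x 1|) := by
    intro i
    rw [hfx i]
    calc |A i 0 * x 0 + A i 1 * x 1| ≤ |A i 0 * x 0| + |A i 1 * x 1| := abs_add_le _ _
    _ = |A i 0| * |x 0| + |A i 1| * |x 1| := by rw [abs_mul, abs_mul]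
    _ ≤ M * (|x 0| + |x 1|) := by
        have h0 := h i 0; have h1 := h i 1
        have := abs_nonneg (x 0); have := abs_nonneg (x 1)
        nlinarith
  set y := (LinearMap.toContinuousLinearMap (Matrix.toEuclideanLin A)) x with hy
  have hny : ‖y‖ = Real.sqrt ((y 0)^2 + (y 1)^2) := by
    rw [EuclideanSpace.norm_eq]
    simp [Fin.sum_univ_two, Real.norm_eq_abs, sq_abs]
  rw [hny]
  have key : (y 0)^2 + (y 1)^2 ≤ (2 * M * ‖x‖)^2 := by
    have h0 := hb 0; have h1 := hb 1
    have e0 : (y 0)^2 ≤ (M * (|x 0| + |x 1|))^2 := by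
      rw [← sq_abs (y 0)]; exact pow_le_pow_left₀ (abs_nonneg _) h0 2
    have e1 : (y 1)^2 ≤ (M * (|x 0| + |x 1|))^2 := by
      rw [← sq_abs (y 1)]; exact pow_le_pow_left₀ (abs_nonneg _) h1 2
    have habs : (|x 0| + |x 1|)^2 ≤ 2 * ‖x‖^2 := by
      rw [hx2]
      nlinarith [sq_nonneg (|x 0| - |x 1|), sq_abs (x 0), sq_abs (x 1)]
    have hM2 : 0 ≤ M^2 := sq_nonneg M
    nlinarith [sq_nonneg (|x 0| + |x 1|)]
  calc Real.sqrt ((y 0)^2 + (y 1)^2) ≤ Real.sqrt ((2 * M * ‖x‖)^2) :=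
        Real.sqrt_le_sqrt key
  _ = 2 * M * ‖x‖ := Real.sqrt_sq (by positivity)

/-- Generic rpow comparison lemma. -/
lemma rpow_comp {C a b t : ℝ} (hC : 1 ≤ C) (ha : 0 < a) (hb : 0 < b)
    (h1 : b ≤ C * a) (h2 : a ≤ C * b) (ht : 0 ≤ t) (ht2 : t ≤ 2) :
    (C ^ 2)⁻¹ * b ^ t ≤ a ^ t ∧ a ^ t ≤ C ^ 2 * b ^ t := by
  have hC0 : 0 < C := lt_of_lt_of_le one_pos hC
  have hCt2 : C ^ t ≤ C ^ 2 := by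
    have := Real.rpow_le_rpow_of_exponent_le hC ht2
    rwa [Real.rpow_two] at this
  constructor
  · rw [inv_mul_le_iff₀ (by positivity)]
    calc b ^ t ≤ (C * a) ^ t := Real.rpow_le_rpow hb.le h1 ht
    _ = C ^ t * a ^ t := Real.mul_rpow hC0.le ha.le
    _ ≤ C ^ 2 * a ^ t := by
        exact mul_le_mul_of_nonneg_right hCt2 (Real.rpow_nonneg ha.le t)
  · calc a ^ t ≤ (C * b) ^ t := Real.rpow_le_rpow ha.le h2 ht
    _ = C ^ t * b ^ t := Real.mul_rpow hC0.le hb.le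
    _ ≤ C ^ 2 * b ^ t := by
        exact mul_le_mul_of_nonneg_right hCt2 (Real.rpow_nonneg hb.le t)

/-- For positive invertible 2×2 matrices and `s ∈ [0,2]` there is `c > 0`
such that `c⁻¹ φ^s(A) ≤ ψ_{A,s}(x) ≤ c φ^s(A)` uniformly over words `A` and `x ∈ (0,1)`. -/
theorem psiReal_comparable_phiSV (N : ℕ) (A : Fin N → Matrix (Fin 2) (Fin 2) ℝ)
    (hpos : ∀ k, ∀ i j, 0 < A k i j) (hinv : ∀ k, (A k).det ≠ 0)
    (s : ℝ) (hs : s ∈ Set.Icc (0 : ℝ) 2) :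
    ∃ c : ℝ, 0 < c ∧ ∀ n : ℕ, 1 ≤ n → ∀ i : Fin n → Fin N, ∀ x ∈ Set.Ioo (0 : ℝ) 1,
      c⁻¹ * phiSV s (((List.ofFn i).map A).prod)
          ≤ psiReal s (((List.ofFn i).map A).prod) x ∧
      psiReal s (((List.ofFn i).map A).prod) x
          ≤ c * phiSV s (((List.ofFn i).map A).prod) := by
  obtain ⟨hs0, hs2⟩ := hs
  rcases Nat.eq_zero_or_pos N with rfl | hN
  · exact ⟨1, one_pos, fun n hn i => (i ⟨0, hn⟩).elim0⟩
  obtain ⟨pm, _, hpm⟩ := Finset.exists_min_image (Finset.univ : Finset (Fin N × Fin 2 × Fin 2))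
    (fun p => A p.1 p.2.1 p.2.2) ⟨⟨⟨0, hN⟩, 0, 0⟩, Finset.mem_univ _⟩
  obtain ⟨pM, _, hpM⟩ := Finset.exists_max_image (Finset.univ : Finset (Fin N × Fin 2 × Fin 2))
    (fun p => A p.1 p.2.1 p.2.2) ⟨⟨⟨0, hN⟩, 0, 0⟩, Finset.mem_univ _⟩
  set ε := A pm.1 pm.2.1 pm.2.2 with hεdef
  set B := A pM.1 pM.2.1 pM.2.2 with hBdef
  have hε : 0 < ε := hpos _ _ _
  set K := max 2 (B / ε) with hKdef
  have hK2 : (2:ℝ) ≤ K := le_max_left _ _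
  have hK0 : (0:ℝ) < K := by linarith
  have hGood : ∀ k, GoodMat K (A k) := by
    intro k
    have key : ∀ a b a' b' : Fin 2, A k a b ≤ K * A k a' b' := by
      intro a b a' b'
      have h1 : A k a b ≤ B := hpM ⟨k, a, b⟩ (Finset.mem_univ _)
      have h2 : ε ≤ A k a' b' := hpm ⟨k, a', b'⟩ (Finset.mem_univ _)
      have h3 : B / ε ≤ K := le_max_right _ _
      calc A k a b ≤ B := h1
      _ = (B / ε) * ε := by field_simp
      _ ≤ K * ε := mul_le_mul_of_nonneg_right h3 hε.le
      _ ≤ K * A k a' b' := mul_le_mul_of_nonneg_left h2 hK0.le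
    exact ⟨hpos k, fun a a' b => key a b a' b, fun a b b' => key a b a b'⟩
  set C := K ^ 4 with hCdef
  have hC1 : (1:ℝ) ≤ C := by rw [hCdef]; nlinarith [hK2, sq_nonneg (K - 2), sq_nonneg (K ^ 2 - 2)]
  refine ⟨C ^ 2, by positivity, ?_⟩
  intro n hn i x hx
  obtain ⟨hx0, hx1⟩ := hx
  set l := (List.ofFn i).map A with hldef
  have hlen : l.length = n := by simp [hldef]
  have hne : l ≠ [] := by
    intro h; rw [h] at hlen; simp at hlen; omega
  have hGP : GoodMat K l.prod := by
    apply GoodMat.list_prod hne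
    intro P hP
    rw [hldef, List.mem_map] at hP
    obtain ⟨a, _, rfl⟩ := hP
    exact hGood a
  set P := l.prod with hPdef
  obtain ⟨hP0, hPc, hPr⟩ := hGP
  set e := P 0 0 with hedef
  have he : 0 < e := hP0 0 0
  have hub : ∀ a b, P a b ≤ K ^ 2 * e := by
    intro a b
    calc P a b ≤ K * P 0 b := hPc a 0 b
    _ ≤ K * (K * P 0 0) := mul_le_mul_of_nonneg_left (hPr 0 b 0) hK0.le
    _ = K ^ 2 * e := by rw [hedef]; ring
  have hlb : ∀ a b, e ≤ K ^ 2 * P a b := by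
    intro a b
    calc e ≤ K * P a 0 := hPc 0 a 0
    _ ≤ K * (K * P a b) := mul_le_mul_of_nonneg_left (hPr a 0 b) hK0.le
    _ = K ^ 2 * P a b := by ring
  have hop1 : e ≤ opNorm P := entry_le_opNorm P 0 0 he.le
  have hop2 : opNorm P ≤ 2 * (K ^ 2 * e) :=
    opNorm_le_of_entries P _ (fun a b => by
      rw [abs_of_nonneg (hP0 a b).le]; exact hub a b)
  have hopP : 0 < opNorm P := lt_of_lt_of_le he hop1
  set w := wReal P x with hwdef
  have hwid : w = x * (P 0 0 + P 1 0) + (1 - x) * (P 0 1 + P 1 1) := by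
    rw [hwdef, wReal]; ring
  have hwlb : 2 * e ≤ K ^ 2 * w := by
    have l1 := hlb 0 0; have l2 := hlb 1 0; have l3 := hlb 0 1; have l4 := hlb 1 1
    rw [hwid]; nlinarith
  have hwub : w ≤ 2 * (K ^ 2 * e) := by
    have u1 := hub 0 0; have u2 := hub 1 0; have u3 := hub 0 1; have u4 := hub 1 1
    rw [hwid]; nlinarith
  have hw0 : 0 < w := by nlinarith
  have hcmp1 : opNorm P ≤ C * w := by
    calc opNorm P ≤ 2 * (K ^ 2 * e) := hop2
    _ = K ^ 2 * (2 * e) := by ring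
    _ ≤ K ^ 2 * (K ^ 2 * w) := mul_le_mul_of_nonneg_left hwlb (by positivity)
    _ = C * w := by rw [hCdef]; ring
  have hcmp2 : w ≤ C * opNorm P := by
    have hK4 : 2 * K ^ 2 ≤ C := by rw [hCdef]; nlinarith [hK2, sq_nonneg (K - 2), sq_nonneg (K ^ 2 - 2)]
    calc w ≤ 2 * (K ^ 2 * e) := hwub
    _ ≤ 2 * (K ^ 2 * opNorm P) := by nlinarith
    _ = (2 * K ^ 2) * opNorm P := by ring
    _ ≤ C * opNorm P := mul_le_mul_of_nonneg_right hK4 hopP.le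
  by_cases hs1 : s ≤ 1
  · obtain ⟨L, U⟩ := rpow_comp hC1 hw0 hopP hcmp1 hcmp2 hs0 hs2
    simp only [psiReal, phiSV, if_pos hs1]
    exact ⟨L, U⟩
  · have ht : (0:ℝ) ≤ 2 - s := by linarith
    have ht2 : 2 - s ≤ 2 := by linarith
    obtain ⟨L, U⟩ := rpow_comp hC1 hw0 hopP hcmp1 hcmp2 ht ht2
    simp only [psiReal, phiSV, if_neg hs1]
    have hD : 0 ≤ |P.det| ^ (s - 1) := Real.rpow_nonneg (abs_nonneg _) _
    constructor
    · calc (C ^ 2)⁻¹ * (opNorm P ^ (2 - s) * |P.det| ^ (s - 1))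
          = ((C ^ 2)⁻¹ * opNorm P ^ (2 - s)) * |P.det| ^ (s - 1) := by ring
      _ ≤ w ^ (2 - s) * |P.det| ^ (s - 1) := mul_le_mul_of_nonneg_right L hD
    · calc w ^ (2 - s) * |P.det| ^ (s - 1)
          ≤ (C ^ 2 * opNorm P ^ (2 - s)) * |P.det| ^ (s - 1) :=
            mul_le_mul_of_nonneg_right U hD
      _ = C ^ 2 * (opNorm P ^ (2 - s) * |P.det| ^ (s - 1)) := by ring
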